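/- Let m ≥ 3 be an integer with m ≢ 0 (mod 4), and let a₁,…,aₙ be positive integers with gcd(a₁,…,aₙ) = 1. Then for every N ∈ ℤ₂ the equation a₁P_m(x₁)+⋯+aₙP_m(xₙ) = N has a solution (x₁,…,xₙ) ∈ ℤ₂ⁿ; that is, ⟨a₁,…,aₙ⟩_m is universal over ℤ₂. -/

import Mathlib

private lemma aux_hensel (u c d : ℤ_[2]) :
    ∃ z : ℤ_[2], u * z ^ 2 + (1 + 2 * c) * z + 2 * d = 0 := by
  set v : ℤ_[2] := 1 + 2 * c with hv_def
  set F : Polynomial ℤ_[2] :=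
    Polynomial.C u * Polynomial.X ^ 2 + Polynomial.C v * Polynomial.X + Polynomial.C (2 * d)
    with hF
  have heval : F.eval 0 = 2 * d := by simp [hF]
  have hderiv : F.derivative.eval 0 = v := by
    simp [hF, Polynomial.derivative_C_mul]
  have h2 : ‖(2 : ℤ_[2])‖ = 2⁻¹ := by
    have := PadicInt.norm_p (p := 2)
    norm_num at this ⊢
    exact this
  have hvnorm : ‖v‖ = 1 := by
    rcases lt_or_eq_of_le (PadicInt.norm_le_one v) with h | h
    · exfalso
      have h1 : (1 : ℤ_[2]) = v + (-(2 * c)) := by ring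
      have : ‖(1 : ℤ_[2])‖ ≤ max ‖v‖ ‖-(2 * c)‖ := by
        rw [h1]; exact PadicInt.nonarchimedean _ _
      rw [norm_one, norm_neg] at this
      have h2c : ‖2 * c‖ < 1 := by
        rw [norm_mul, h2]
        calc 2⁻¹ * ‖c‖ ≤ 2⁻¹ * 1 := by
              exact mul_le_mul_of_nonneg_left (PadicInt.norm_le_one c) (by norm_num)
          _ < 1 := by norm_num
      have := le_max_iff.mp this
      rcases this with h' | h' <;> linarith
    · exact h
  have hnorm : ‖F.eval 0‖ < ‖F.derivative.eval 0‖ ^ 2 := by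
    rw [heval, hderiv, hvnorm, one_pow, norm_mul, h2]
    calc 2⁻¹ * ‖d‖ ≤ 2⁻¹ * 1 :=
          mul_le_mul_of_nonneg_left (PadicInt.norm_le_one d) (by norm_num)
      _ < 1 := by norm_num
  obtain ⟨z, hz, -⟩ := hensels_lemma hnorm
  refine ⟨z, ?_⟩
  have := hz
  simp only [hF, Polynomial.coe_aeval_eq_eval, Polynomial.eval_add, Polynomial.eval_mul, Polynomial.eval_C,
    Polynomial.eval_X, Polynomial.eval_pow] at this
  linear_combination this

/-- a primitive `m`-gonal form with `m ≢ 0 (mod 4)` is universal over `ℤ₂`.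
The `m`-gonal equation is stated multiplied by `2` (an equivalent formulation, since `2` is a
nonzerodivisor in `ℤ₂`). -/
theorem stmt10 (m : ℤ) (hm : 3 ≤ m) (hm4 : ¬ (4 : ℤ) ∣ m)
    (n : ℕ) (a : Fin n → ℤ) (ha : ∀ i, 0 < a i)
    (hprim : Finset.univ.gcd a = 1) :
    ∀ N : ℤ_[2],
      ∃ x : Fin n → ℤ_[2],
        ∑ i, (a i : ℤ_[2]) * (((m : ℤ_[2]) - 2) * ((x i) ^ 2 - x i) + 2 * x i)
          = 2 * N := by
  intro N
  -- find an index with odd coefficient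
  have hodd : ∃ i, ¬ (2 : ℤ) ∣ a i := by
    by_contra h
    push_neg at h
    have h2 : (2 : ℤ) ∣ Finset.univ.gcd a := Finset.dvd_gcd (fun i _ => h i)
    rw [hprim] at h2
    norm_num at h2
  obtain ⟨i, hi⟩ := hodd
  have hunit : IsUnit ((a i : ℤ_[2])) := by
    rw [PadicInt.isUnit_iff]
    refine le_antisymm (PadicInt.norm_le_one _) ?_
    by_contra h
    push_neg at h
    exact hi ((PadicInt.norm_int_lt_one_iff_dvd _).mp h)
  obtain ⟨b, hB'⟩ : ∃ b : ℤ_[2], (a i : ℤ_[2]) * b = 1 := by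
    obtain ⟨B, hB⟩ := hunit
    exact ⟨(B⁻¹ : ℤ_[2]ˣ), by rw [← hB]; exact_mod_cast B.mul_inv⟩
  rcases Int.even_or_odd m with hme | hmo
  · -- m even, so m ≡ 2 (mod 4): m = 4t + 2
    obtain ⟨t, ht⟩ : ∃ t : ℤ, m = 4 * t + 2 := by
      obtain ⟨k, hk⟩ := hme; exact ⟨(k - 1) / 2, by omega⟩
    have hm2 : (m : ℤ_[2]) = 4 * (t : ℤ_[2]) + 2 := by rw [ht]; push_cast; ring
    obtain ⟨y, hz⟩ := aux_hensel (2 * (t : ℤ_[2])) (2 * (t : ℤ_[2]) * N * b - (t : ℤ_[2]))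
      ((t : ℤ_[2]) * ((N * b) ^ 2 - N * b))
    refine ⟨fun j => if j = i then N * b + y else 0, ?_⟩
    rw [Fintype.sum_eq_single i (fun j hj => by simp [if_neg hj])]
    beta_reduce
    rw [if_pos rfl]
    linear_combination (a i : ℤ_[2]) * ((N * b + y) ^ 2 - (N * b + y)) * hm2
      + 2 * (a i : ℤ_[2]) * hz + 2 * N * hB'
  · -- m odd: m = 2k + 1
    obtain ⟨k, hk⟩ := hmo
    have hkc : (m : ℤ_[2]) = 2 * (k : ℤ_[2]) + 1 := by rw [hk]; push_cast; ring
    obtain ⟨z, hz⟩ := aux_hensel ((m : ℤ_[2]) - 2) (1 - (k : ℤ_[2])) (-(N * b))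
    refine ⟨fun j => if j = i then z else 0, ?_⟩
    rw [Fintype.sum_eq_single i (fun j hj => by simp [if_neg hj])]
    beta_reduce
    rw [if_pos rfl]
    linear_combination (a i : ℤ_[2]) * hz - (a i : ℤ_[2]) * z * hkc + 2 * N * hB'
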